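/- arXiv:math/0209133 — 2 statements merged into one kernel-verified Lean document; each statement's English description precedes it below -/
import Mathlib

section
/- Let l be a Lyndon word of length ≥ 2 and let l = l_1 l_2 be its co-standard factorization, i.e. l_1 is the longest proper nonempty left factor of l which is a Lyndon word and l_2 is the complementary right factor. Then l_2 = l_1^k · f · x for some integer k ≥ 0, some (possibly empty) proper left factor f of l_1, and some letter x such that f·x > l_1 lexicographically. In particular, l_2 is also a Lyndon word. -/
/-- Lexicographic order on words over a linearly ordered alphabet
(a proper left factor is smaller than the word). -/
def wlt {α : Type*} [LinearOrder α] (w x : List α) : Prop := List.Lex (· < ·) w x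

/-- A nonempty word is Lyndon if it is lexicographically smaller than every proper
nonempty right factor (suffix) of itself. -/
def IsLyndon {α : Type*} [LinearOrder α] (l : List α) : Prop :=
  l ≠ [] ∧ ∀ u v : List α, l = u ++ v → u ≠ [] → v ≠ [] → wlt l v

namespace LyndonAux

variable {α : Type*} [LinearOrder α]

/-- strong lexicographic less-than: a common prefix followed by a strictly smaller letter. -/
def slt (s t : List α) : Prop :=
  ∃ (p : List α) (a b : α), a < b ∧ p ++ [a] <+: s ∧ p ++ [b] <+: t

lemma lex_append_of_lt (p : List α) {a b : α} (h : a < b) (s t : List α) :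
    List.Lex (· < ·) (p ++ a :: s) (p ++ b :: t) := by
  induction p with
  | nil => exact List.Lex.rel h
  | cons c p ih => exact List.Lex.cons ih

lemma slt.wlt {s t : List α} (h : slt s t) : wlt s t := by
  obtain ⟨p, a, b, hab, ⟨s1, hs⟩, ⟨t1, ht⟩⟩ := h
  rw [← hs, ← ht]
  unfold _root_.wlt
  simpa [List.append_assoc] using lex_append_of_lt p hab s1 t1

lemma slt_append {s t u v : List α} (h : slt s t) : slt (s ++ u) (t ++ v) := by
  obtain ⟨p, a, b, hab, hs, ht⟩ := h
  exact ⟨p, a, b, hab, hs.trans (List.prefix_append _ _), ht.trans (List.prefix_append _ _)⟩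

lemma slt_cons_append {s t : List α} (c : List α) (h : slt s t) : slt (c ++ s) (c ++ t) := by
  obtain ⟨p, a, b, hab, ⟨s1, hs⟩, ⟨t1, ht⟩⟩ := h
  exact ⟨c ++ p, a, b, hab, ⟨s1, by rw [← hs]; simp [List.append_assoc]⟩,
    ⟨t1, by rw [← ht]; simp [List.append_assoc]⟩⟩

lemma wlt_of_prefix {s t : List α} (h : s <+: t) (hne : s ≠ t) : wlt s t := by
  obtain ⟨d, rfl⟩ := h
  have hd : d ≠ [] := by rintro rfl; simp at hne
  clear hne
  induction s with
  | nil =>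
    cases d with
    | nil => exact absurd rfl hd
    | cons a d => exact List.Lex.nil
  | cons a s ih => exact List.Lex.cons ih

lemma wlt_cases {s t : List α} (h : wlt s t) : s <+: t ∨ slt s t := by
  induction h with
  | nil => exact Or.inl (List.nil_prefix)
  | @cons a s t h ih =>
    rcases ih with h' | ⟨p, x, y, hxy, hp1, hp2⟩
    · exact Or.inl (List.cons_prefix_cons.mpr ⟨rfl, h'⟩)
    · exact Or.inr ⟨a :: p, x, y, hxy, List.cons_prefix_cons.mpr ⟨rfl, hp1⟩,
        List.cons_prefix_cons.mpr ⟨rfl, hp2⟩⟩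
  | @rel a s b t hab =>
    exact Or.inr ⟨[], a, b, hab, List.cons_prefix_cons.mpr ⟨rfl, List.nil_prefix⟩,
      List.cons_prefix_cons.mpr ⟨rfl, List.nil_prefix⟩⟩

lemma wlt_trans {s t u : List α} (h1 : wlt s t) (h2 : wlt t u) : wlt s u :=
  show List.Lex (· < ·) s u from
    List.lt_trans (show List.Lex (· < ·) s t from h1) (show List.Lex (· < ·) t u from h2)

lemma wlt_asymm {s t : List α} (h1 : wlt s t) (h2 : wlt t s) : False :=
  List.lt_asymm (show s < t from h1) (show t < s from h2)

/-- strong less-than for a Lyndon word against a proper nonempty suffix. -/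
lemma lyndon_slt {u a b : List α} (hu : IsLyndon u) (hsplit : u = a ++ b)
    (ha : a ≠ []) (hb : b ≠ []) : slt u b := by
  have h := hu.2 a b hsplit ha hb
  rcases wlt_cases h with h' | h'
  · exfalso
    have h1 : b.length < u.length := by
      rw [hsplit]
      have := List.length_pos_iff.mpr ha
      simp; omega
    have h2 := h'.length_le
    omega
  · exact h'

lemma wlt_head {s t : List α} (h : wlt s t) {a b : α} {s' t' : List α}
    (hs : s = a :: s') (ht : t = b :: t') : a ≤ b := by
  subst hs; subst ht
  cases h with
  | cons h => exact le_refl _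
  | rel h => exact le_of_lt h

lemma flat_succ (k : ℕ) (u : List α) :
    (List.replicate (k+1) u).flatten = u ++ (List.replicate k u).flatten := by
  simp [List.replicate_succ]

lemma flat_succ' (k : ℕ) (u : List α) :
    (List.replicate (k+1) u).flatten = (List.replicate k u).flatten ++ u := by
  induction k with
  | zero => simp
  | succ k ih =>
    calc (List.replicate (k+2) u).flatten
        = u ++ (List.replicate (k+1) u).flatten := flat_succ _ u
      _ = u ++ ((List.replicate k u).flatten ++ u) := by rw [ih]
      _ = (u ++ (List.replicate k u).flatten) ++ u := by rw [List.append_assoc]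
      _ = (List.replicate (k+1) u).flatten ++ u := by rw [← flat_succ]

lemma flat_len (k : ℕ) (u : List α) :
    ((List.replicate k u).flatten).length = k * u.length := by
  induction k with
  | zero => simp
  | succ k ih =>
    rw [flat_succ]
    simp [ih]
    ring

/-- Decompose any word as a maximal power of `u` followed by a remainder not starting with `u`. -/
lemma exists_max_pow {u : List α} (hu : u ≠ []) (s : List α) :
    ∃ k r, s = (List.replicate k u).flatten ++ r ∧ ¬ u <+: r := by
  suffices H : ∀ n (s : List α), s.length = n →
      ∃ k r, s = (List.replicate k u).flatten ++ r ∧ ¬ u <+: r from H _ s rfl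
  intro n
  induction n using Nat.strong_induction_on with
  | _ n ih =>
    rintro s rfl
    by_cases hp : u <+: s
    · obtain ⟨r0, rfl⟩ := hp
      have hul : 0 < u.length := List.length_pos_iff.mpr hu
      obtain ⟨k, r, hr, hnp⟩ := ih r0.length (by rw [List.length_append]; omega) r0 rfl
      exact ⟨k + 1, r, by rw [flat_succ, hr, List.append_assoc], hnp⟩
    · exact ⟨0, s, by simp, hp⟩

/-- Two words neither of which is a prefix of the other differ after a common prefix. -/
lemma exists_diff {s t : List α} (h1 : ¬ s <+: t) (h2 : ¬ t <+: s) :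
    ∃ (p : List α) (a b : α) (s' t' : List α),
      a ≠ b ∧ s = p ++ a :: s' ∧ t = p ++ b :: t' := by
  induction s generalizing t with
  | nil => exact absurd (List.nil_prefix) h1
  | cons a s ihs =>
    cases t with
    | nil => exact absurd (List.nil_prefix) h2
    | cons b t =>
      by_cases hab : a = b
      · subst hab
        have h1' : ¬ s <+: t := fun h => h1 (List.cons_prefix_cons.mpr ⟨rfl, h⟩)
        have h2' : ¬ t <+: s := fun h => h2 (List.cons_prefix_cons.mpr ⟨rfl, h⟩)
        obtain ⟨p, c, d, s', t', hcd, hs, ht⟩ := ihs h1' h2'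
        exact ⟨a :: p, c, d, s', t', hcd, by rw [hs]; rfl, by rw [ht]; rfl⟩
      · exact ⟨[], a, b, s, t, hab, rfl, rfl⟩

section PowExt

variable {u f t : List α} {y x : α}

lemma pow_ext_step (hsplit : u = f ++ y :: t) (hyx : y < x) (m : ℕ) :
    slt ((List.replicate (m+1) u).flatten ++ f ++ [x])
        ((List.replicate m u).flatten ++ f ++ [x]) := by
  have hkey : slt (u ++ f ++ [x]) (f ++ [x]) := by
    refine ⟨f, y, x, hyx, ?_, List.prefix_refl _⟩
    refine List.IsPrefix.trans ?_ (List.prefix_append _ _)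
    exact ⟨t ++ f, by rw [hsplit]; simp⟩
  have h1 : (List.replicate (m+1) u).flatten ++ f ++ [x]
      = (List.replicate m u).flatten ++ (u ++ f ++ [x]) := by
    rw [flat_succ']; simp [List.append_assoc]
  have h2 : (List.replicate m u).flatten ++ f ++ [x]
      = (List.replicate m u).flatten ++ (f ++ [x]) := by
    simp [List.append_assoc]
  rw [h1, h2]
  exact slt_cons_append _ hkey

lemma pow_ext_claim (hu : IsLyndon u) (hsplit : u = f ++ y :: t) (hyx : y < x) :
    ∀ m b, b <:+ (List.replicate m u).flatten ++ f ++ [x] → b ≠ [] →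
      b.length < ((List.replicate m u).flatten ++ f ++ [x]).length →
      wlt ((List.replicate m u).flatten ++ f ++ [x]) b := by
  have hune : u ≠ [] := hu.1
  intro m
  induction m with
  | zero =>
    intro b hsuf hbne hblen
    simp only [List.replicate, List.flatten_nil, List.nil_append] at hsuf hblen ⊢
    obtain ⟨a, ha⟩ := hsuf
    obtain ⟨g, x', rfl⟩ : ∃ g x', b = g ++ [x'] :=
      ⟨b.dropLast, b.getLast hbne, (List.dropLast_append_getLast hbne).symm⟩
    have ha' : (a ++ g) ++ [x'] = f ++ [x] := by rw [← ha]; simp [List.append_assoc]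
    obtain ⟨hfg, hx⟩ := List.append_inj' ha' (by simp)
    obtain rfl : x = x' := by simpa using hx.symm
    have hane : a ≠ [] := by
      rintro rfl
      simp only [List.nil_append] at hfg
      subst hfg
      simp at hblen
    have husplit : u = a ++ (g ++ y :: t) := by
      rw [hsplit, ← hfg]; simp [List.append_assoc]
    have hglen : g.length < f.length := by
      rw [← hfg]
      have := List.length_pos_iff.mpr hane
      simp; omega
    have hfu : f <+: u := ⟨y :: t, hsplit.symm⟩
    by_cases hg : g = []
    · -- b = [x]; compare first letters of u and y
      subst hg
      simp only [List.nil_append] at husplit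
      have hslt := lyndon_slt hu husplit hane (by simp)
      obtain ⟨a0, s0, ha0⟩ : ∃ a0 s0, u = a0 :: s0 := by
        cases u with
        | nil => exact absurd rfl hune
        | cons a0 s0 => exact ⟨a0, s0, rfl⟩
      have hhead : a0 ≤ y := wlt_head hslt.wlt ha0 rfl
      have hfpos : f ≠ [] := by intro hf; rw [hf] at hglen; simp at hglen
      obtain ⟨f0, f1, hf0⟩ : ∃ f0 f1, f = f0 :: f1 := by
        cases f with
        | nil => exact absurd rfl hfpos
        | cons f0 f1 => exact ⟨f0, f1, rfl⟩
      have hf0a0 : f0 = a0 := by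
        have h2 : a0 :: s0 = f0 :: (f1 ++ y :: t) := by rw [← ha0, hsplit, hf0]; rfl
        injection h2 with h3 _
        exact h3.symm
      refine slt.wlt ⟨[], a0, x, lt_of_le_of_lt hhead hyx, ?_, ?_⟩
      · rw [hf0, hf0a0]; exact List.cons_prefix_cons.mpr ⟨rfl, List.nil_prefix⟩
      · simp
    · -- g nonempty
      have hslt := lyndon_slt hu husplit hane (by simp)
      obtain ⟨q, c, d, hcd, hq1, hq2⟩ := hslt
      by_cases hq : q.length + 1 ≤ g.length
      · -- difference inside g
        have hqg : q ++ [d] <+: g := by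
          refine List.prefix_of_prefix_length_le hq2 (List.prefix_append _ _) (by simp; omega)
        have hqf : q ++ [c] <+: f :=
          List.prefix_of_prefix_length_le hq1 hfu (by simp; omega)
        exact slt.wlt ⟨q, c, d, hcd, hqf.trans (List.prefix_append _ _),
          hqg.trans (List.prefix_append _ _)⟩
      · push_neg at hq
        have hqpre : q <+: g ++ y :: t := (List.prefix_append q [d]).trans hq2
        refine slt.wlt ?_
        by_cases heq : q.length = g.length
        · -- q = g and d = y
          have hqg : q = g :=
            (List.prefix_of_prefix_length_le hqpre (List.prefix_append _ _)
              (le_of_eq heq)).eq_of_length heq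
          subst hqg
          have hdy : d = y := by
            obtain ⟨rest, hrest⟩ := (List.prefix_append_right_inj q).mp hq2
            have h2 : d = y ∧ rest = t := by simpa using hrest
            exact h2.1
          have hqf : q ++ [c] <+: f :=
            List.prefix_of_prefix_length_le hq1 hfu (by simp; omega)
          exact ⟨q, c, x, lt_trans (hdy ▸ hcd) hyx, hqf.trans (List.prefix_append _ _),
            List.prefix_refl _⟩
        · -- g ++ [y] is a prefix of q, hence of u, hence of f
          have hgyq : g ++ [y] <+: q :=
            List.prefix_of_prefix_length_le ⟨t, by simp⟩ hqpre (by simp; omega)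
          have hgyu : g ++ [y] <+: u :=
            (hgyq.trans (List.prefix_append q [c])).trans hq1
          have hgyf : g ++ [y] <+: f :=
            List.prefix_of_prefix_length_le hgyu hfu (by simp; omega)
          exact ⟨g, y, x, hyx, hgyf.trans (List.prefix_append _ _), List.prefix_refl _⟩
  | succ m ih =>
    intro b hsuf hbne hblen
    have hw1 : (List.replicate (m+1) u).flatten ++ f ++ [x]
        = u ++ ((List.replicate m u).flatten ++ f ++ [x]) := by
      rw [flat_succ]; simp [List.append_assoc]
    rw [hw1] at hsuf hblen ⊢
    set W := (List.replicate m u).flatten ++ f ++ [x] with hW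
    obtain ⟨a, ha⟩ := hsuf
    have hlens : a.length + b.length = u.length + W.length := by
      have := congrArg List.length ha
      simpa using this
    simp only [List.length_append] at hblen
    by_cases hcase : u.length ≤ a.length
    · have hau : u <+: a :=
        List.prefix_of_prefix_length_le ⟨W, ha.symm⟩ ⟨b, rfl⟩ hcase
      obtain ⟨a', rfl⟩ := hau
      have hwm : W = a' ++ b := by
        have : u ++ (a' ++ b) = u ++ W := by rw [← List.append_assoc, ha]
        exact (List.append_cancel_left this).symm
      by_cases hb' : a' = []
      · subst hb'
        simp only [List.nil_append] at hwm
        subst hwm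
        rw [← hw1]
        exact (pow_ext_step hsplit hyx m).wlt
      · have hlen : b.length < W.length := by
          rw [hwm]
          have := List.length_pos_iff.mpr hb'
          simp; omega
        have h2 := ih b ⟨a', hwm.symm⟩ hbne hlen
        refine wlt_trans ?_ h2
        rw [← hw1]
        exact (pow_ext_step hsplit hyx m).wlt
    · push_neg at hcase
      have hau : a <+: u :=
        List.prefix_of_prefix_length_le ⟨b, rfl⟩ ⟨W, ha.symm⟩ (le_of_lt hcase)
      obtain ⟨s, hus⟩ := hau
      have hb : b = s ++ W := by
        have : a ++ b = a ++ (s ++ W) := by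
          rw [ha, ← hus, List.append_assoc]
        exact List.append_cancel_left this
      have hsne : s ≠ [] := by
        intro hs
        rw [hs, List.append_nil] at hus
        rw [hus] at hcase
        omega
      have hane : a ≠ [] := by
        intro haa
        rw [haa] at hus
        simp only [List.nil_append] at hus
        rw [hb, hus] at hblen
        simp at hblen
      have hslt := lyndon_slt hu hus.symm hane hsne
      rw [hb]
      exact (slt_append hslt).wlt

/-- Key lemma: if `u = f ++ y :: t` is Lyndon and `y < x`, then `u^m f x` is Lyndon. -/
lemma lyndon_pow_ext (hu : IsLyndon u) (hsplit : u = f ++ y :: t) (hyx : y < x) (m : ℕ) :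
    IsLyndon ((List.replicate m u).flatten ++ f ++ [x]) := by
  constructor
  · simp
  · intro a b heq hane hbne
    have hsuf : b <:+ (List.replicate m u).flatten ++ f ++ [x] := ⟨a, heq.symm⟩
    have hblen : b.length < ((List.replicate m u).flatten ++ f ++ [x]).length := by
      rw [heq]
      have := List.length_pos_iff.mpr hane
      simp; omega
    exact pow_ext_claim hu hsplit hyx m b hsuf hbne hblen

end PowExt

end LyndonAux

open LyndonAux

/-- Lemma 3.1: if `l = l₁ l₂` is the co-standard factorization of a Lyndon word `l`
(`l₁` the longest proper nonempty Lyndon left factor), then `l₂ = l₁^k · f · x` for some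
`k ≥ 0`, some proper left factor `f` of `l₁` (possibly empty) and a letter `x` with
`f·x > l₁`; in particular `l₂` is a Lyndon word. -/
theorem costandard_factorization_structure {α : Type*} [LinearOrder α] [Fintype α]
    (l l₁ l₂ : List α) (hLy : IsLyndon l) (hlen : 2 ≤ l.length)
    (hsplit : l = l₁ ++ l₂) (h1ne : l₁ ≠ []) (h2ne : l₂ ≠ [])
    (h1Ly : IsLyndon l₁)
    (h1long : ∀ u v : List α, l = u ++ v → u ≠ [] → v ≠ [] → IsLyndon u →
      u.length ≤ l₁.length) :
    IsLyndon l₂ ∧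
    ∃ (k : ℕ) (f : List α) (x : α),
      f <+: l₁ ∧ f ≠ l₁ ∧ wlt l₁ (f ++ [x]) ∧
      l₂ = (List.replicate k l₁).flatten ++ f ++ [x] := by
  obtain ⟨k, r, hdecomp, hnp⟩ := exists_max_pow h1ne l₂
  have h1len : 0 < l₁.length := List.length_pos_iff.mpr h1ne
  -- r is nonempty
  have hrne : r ≠ [] := by
    rintro rfl
    rw [List.append_nil] at hdecomp
    -- l₂ = l₁^k, so l = l₁^{k+1}
    have hk : k ≠ 0 := by rintro rfl; simp [hdecomp] at h2ne
    have hll : l = l₂ ++ l₁ := by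
      rw [hsplit, hdecomp]
      obtain ⟨j, rfl⟩ : ∃ j, k = j + 1 := ⟨k - 1, (Nat.succ_pred_eq_of_pos (Nat.pos_of_ne_zero hk)).symm⟩
      rw [flat_succ', ← List.append_assoc, ← flat_succ, flat_succ']
    have h1 : wlt l l₂ := hLy.2 l₁ l₂ hsplit h1ne h2ne
    have h2 : wlt l₂ l := by
      refine wlt_of_prefix ⟨l₁, hll.symm⟩ ?_
      intro h
      have hh := congrArg List.length hll
      rw [← h, List.length_append] at hh
      omega
    exact wlt_asymm h1 h2
  -- r is not a prefix of l₁
  have hrsuf : l = (l₁ ++ (List.replicate k l₁).flatten) ++ r := by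
    rw [hsplit, hdecomp, List.append_assoc]
  have hwlr : wlt l r := hLy.2 _ r hrsuf (by simp [h1ne]) hrne
  have hnp' : ¬ r <+: l₁ := by
    intro hpre
    have hrl : r <+: l := hpre.trans (hsplit ▸ List.prefix_append _ _)
    have hrnel : r ≠ l := by
      intro h
      have h1 := hpre.length_le
      have := congrArg List.length hsplit
      have h2 : 0 < l₂.length := List.length_pos_iff.mpr h2ne
      rw [← h] at this
      simp at this
      omega
    exact wlt_asymm hwlr (wlt_of_prefix hrl hrnel)
  obtain ⟨p, x, y, r', t, hxy, hrdef, hudef⟩ := exists_diff hnp' hnp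
  -- show y < x
  have hyx : y < x := by
    rcases lt_trichotomy x y with h | h | h
    · exfalso
      have : slt r l := by
        refine ⟨p, x, y, h, ⟨r', by rw [hrdef]; simp⟩, ?_⟩
        refine List.IsPrefix.trans ⟨t, by rw [hudef]; simp⟩ (hsplit ▸ List.prefix_append _ _)
      exact wlt_asymm hwlr this.wlt
    · exact absurd h hxy
    · exact h
  -- show r' = []
  have hr' : r' = [] := by
    by_contra hr'ne
    have hwLy : IsLyndon ((List.replicate (k+1) l₁).flatten ++ p ++ [x]) :=
      lyndon_pow_ext h1Ly hudef hyx (k+1)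
    have hleq : l = ((List.replicate (k+1) l₁).flatten ++ p ++ [x]) ++ r' := by
      rw [hsplit, hdecomp, hrdef, flat_succ]
      simp [List.append_assoc]
    have hlen2 := h1long _ r' hleq (by simp) hr'ne hwLy
    have hlen3 : ((List.replicate (k+1) l₁).flatten ++ p ++ [x]).length
        = (k+1) * l₁.length + (p.length + 1) := by
      simp [flat_len]
    rw [hlen3] at hlen2
    nlinarith
  subst hr'
  have hl2 : l₂ = (List.replicate k l₁).flatten ++ p ++ [x] := by
    rw [hdecomp, hrdef, List.append_assoc]
  constructor
  · rw [hl2]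
    exact lyndon_pow_ext h1Ly hudef hyx k
  · refine ⟨k, p, x, ⟨y :: t, hudef.symm⟩, ?_, ?_, hl2⟩
    · intro h
      have := congrArg List.length hudef
      rw [← h] at this
      simp at this
    · exact slt.wlt ⟨p, y, x, hyx, ⟨t, by rw [hudef]; simp⟩, List.prefix_refl _⟩
end

section
/- Let l be a Lyndon word and let w be a word with w ≤ l lexicographically. Then every interleaving of l and w is lexicographically ≤ l·w, and l·w itself is an interleaving of l and w; that is, l·w is the largest word occurring in the shuffle product of l and w. -/
def wle {α : Type*} [LinearOrder α] (w x : List α) : Prop := wlt w x ∨ w = x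

/-- `Interleave u v z` : the word `z` is an interleaving (a term of the shuffle product)
of the words `u` and `v`. -/
inductive Interleave {α : Type*} : List α → List α → List α → Prop
  | nil : Interleave [] [] []
  | left {u v z : List α} {a : α} : Interleave u v z → Interleave (a :: u) v (a :: z)
  | right {u v z : List α} {a : α} : Interleave u v z → Interleave u (a :: v) (a :: z)

namespace LyndonShuffleAux

open List

variable {α : Type*} [LinearOrder α]

/-! ### Lex basics -/

theorem wle_nil (x : List α) : wle [] x := by
  cases x with
  | nil => exact Or.inr rfl
  | cons a t => exact Or.inl List.Lex.nil

theorem wle_cons {a : α} {x y : List α} (h : wle x y) : wle (a :: x) (a :: y) := by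
  rcases h with h | rfl
  · exact Or.inl (List.Lex.cons h)
  · exact Or.inr rfl

theorem lex_cons_le {a b : α} {x y : List α} (h : List.Lex (· < ·) (a :: x) (b :: y)) :
    a ≤ b := by
  cases h with
  | rel h => exact le_of_lt h
  | cons h => exact le_rfl

theorem lex_append_cancel : ∀ (x u v : List α),
    List.Lex (· < ·) (x ++ u) (x ++ v) → List.Lex (· < ·) u v
  | [], u, v, h => h
  | a :: x, u, v, h => by
    cases h with
    | rel h => exact absurd h (lt_irrefl a)
    | cons h => exact lex_append_cancel x u v h

theorem lex_append_self (v u : List α) : ¬ List.Lex (· < ·) (v ++ u) v := by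
  induction v with
  | nil => intro h; cases h
  | cons a v ih =>
    intro h
    cases h with
    | rel h => exact absurd h (lt_irrefl a)
    | cons h => exact ih h

theorem lex_prefix (v : List α) {u : List α} (hu : u ≠ []) : List.Lex (· < ·) v (v ++ u) := by
  induction v with
  | nil =>
    cases u with
    | nil => exact absurd rfl hu
    | cons a t => exact List.Lex.nil
  | cons a v ih => exact List.Lex.cons ih

theorem lex_asymm : ∀ {x y : List α},
    List.Lex (· < ·) x y → List.Lex (· < ·) y x → False := by
  intro x y h
  induction h with
  | nil =>
    intro h2
    cases h2
  | rel h =>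
    intro h2
    cases h2 with
    | rel h3 => exact absurd (h.trans h3) (lt_irrefl _)
    | cons h3 => exact absurd h (lt_irrefl _)
  | cons h ih =>
    intro h2
    cases h2 with
    | rel h3 => exact absurd h3 (lt_irrefl _)
    | cons h3 => exact ih h3

/-! ### Interleave basics -/

theorem il_nil_right : ∀ (u : List α), Interleave u [] u
  | [] => .nil
  | _ :: u => .left (il_nil_right u)

theorem il_nil_left : ∀ (v : List α), Interleave [] v v
  | [] => .nil
  | _ :: v => .right (il_nil_left v)

theorem il_out_nil {u v : List α} (h : Interleave u v []) : u = [] ∧ v = [] := by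
  cases h; exact ⟨rfl, rfl⟩

theorem il_comm {u v z : List α} (h : Interleave u v z) : Interleave v u z := by
  induction h with
  | nil => exact .nil
  | left _ ih => exact .right ih
  | right _ ih => exact .left ih

theorem il_snoc_left {u v z : List α} (c : α) (h : Interleave u v z) :
    Interleave (u ++ [c]) v (z ++ [c]) := by
  induction h with
  | nil => exact .left .nil
  | left _ ih => exact .left ih
  | right _ ih => exact .right ih

theorem il_snoc_inv : ∀ {u v z : List α} {c : α}, Interleave u v (z ++ [c]) →
    (∃ u₀, u = u₀ ++ [c] ∧ Interleave u₀ v z) ∨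
    (∃ v₀, v = v₀ ++ [c] ∧ Interleave u v₀ z) := by
  intro u v z c h
  induction z generalizing u v with
  | nil =>
    cases h with
    | left h' =>
      rcases il_out_nil h' with ⟨rfl, rfl⟩
      exact Or.inl ⟨[], rfl, .nil⟩
    | right h' =>
      rcases il_out_nil h' with ⟨rfl, rfl⟩
      exact Or.inr ⟨[], rfl, .nil⟩
  | cons b z ih =>
    cases h with
    | left h' =>
      rcases ih h' with ⟨u₀, rfl, hh⟩ | ⟨v₀, rfl, hh⟩
      · exact Or.inl ⟨b :: u₀, rfl, .left hh⟩
      · exact Or.inr ⟨v₀, rfl, .left hh⟩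
    | right h' =>
      rcases ih h' with ⟨u₀, rfl, hh⟩ | ⟨v₀, rfl, hh⟩
      · exact Or.inl ⟨u₀, rfl, .right hh⟩
      · exact Or.inr ⟨b :: v₀, rfl, .right hh⟩

theorem il_concat (l w : List α) : Interleave l w (l ++ w) := by
  induction l with
  | nil => exact il_nil_left w
  | cons a l ih => exact .left ih

theorem snoc_inj {x y : List α} {a b : α} (h : x ++ [a] = y ++ [b]) : x = y ∧ a = b := by
  rcases List.append_inj' h rfl with ⟨h1, h2⟩
  exact ⟨h1, by injection h2⟩

theorem cons_eq_inv {a b : α} {x y : List α} (h : a :: x = b :: y) : a = b ∧ x = y :=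
  ⟨by injection h, by injection h⟩

theorem gidx {l : List α} {a b : ℕ} {ha : a < l.length} {hb : b < l.length}
    (h : a = b) : l[a]'ha = l[b]'hb := by
  subst h; rfl

/-! ### take/drop helpers -/

theorem take_succ' {l : List α} {n : ℕ} (h : n < l.length) :
    l.take (n + 1) = l.take n ++ [l[n]] := by
  rw [← List.take_concat_get h, List.concat_eq_append]

theorem drop_cons_inv {l u : List α} {a : α} {i : ℕ} (h : a :: u = l.drop i) :
    ∃ (hi : i < l.length), a = l[i] ∧ u = l.drop (i + 1) := by
  have hi : i < l.length := by
    by_contra hcon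
    push_neg at hcon
    rw [List.drop_eq_nil_of_le hcon] at h
    exact absurd h (by simp)
  rw [List.drop_eq_getElem_cons hi] at h
  exact ⟨hi, (cons_eq_inv h).1, (cons_eq_inv h).2⟩

/-! ### Lyndon basics -/

theorem lyndon_length_pos {l : List α} (hl : IsLyndon l) : 0 < l.length :=
  List.length_pos_iff.mpr hl.1

theorem lyndon_suffix {l : List α} (hl : IsLyndon l) {k : ℕ} (h1 : 1 ≤ k)
    (h2 : k < l.length) : wlt l (l.drop k) := by
  apply hl.2 (l.take k) (l.drop k) (List.take_append_drop k l).symm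
  · intro hcon
    rcases List.take_eq_nil_iff.mp hcon with h | h
    · omega
    · exact hl.1 h
  · intro hcon
    rw [List.drop_eq_nil_iff] at hcon
    omega

theorem min_letter {l : List α} (hl : IsLyndon l) {k : ℕ} (hk : k < l.length) :
    l[0]'(lyndon_length_pos hl) ≤ l[k] := by
  rcases Nat.eq_zero_or_pos k with rfl | hk1
  · exact le_rfl
  · have hlt := lyndon_suffix hl hk1 hk
    unfold wlt at hlt
    rw [List.drop_eq_getElem_cons hk] at hlt
    obtain ⟨a, t, rfl⟩ := List.exists_cons_of_ne_nil hl.1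
    exact lex_cons_le hlt

/-- Periodicity predicate: `l[r] = l[r-p]` for `p ≤ r < m`. -/
def Per (l : List α) (m p : ℕ) : Prop :=
  ∀ r (hr : r < l.length), p ≤ r → r < m →
    l[r] = l[r - p]'(lt_of_le_of_lt (Nat.sub_le r p) hr)

/-- Fact D: a period of a prefix of a Lyndon word extends weakly increasing. -/
theorem factD {l : List α} (hl : IsLyndon l) {p m : ℕ} (hp : 1 ≤ p) (hpm : p ≤ m)
    (hmN : m < l.length) (hper : Per l m p) :
    l[m - p]'(lt_of_le_of_lt (Nat.sub_le m p) hmN) ≤ l[m] := by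
  have hpp : p < l.length := lt_of_le_of_lt hpm hmN
  have htake : (l.drop p).take (m - p) = l.take (m - p) := by
    apply List.ext_getElem
    · rw [List.length_take, List.length_take, List.length_drop,
          inf_eq_left.mpr (show m - p ≤ l.length - p by omega),
          inf_eq_left.mpr (show m - p ≤ l.length by omega)]
    · intro n h1 h2
      have hn : n < m - p := by
        rw [List.length_take, List.length_drop, lt_inf_iff] at h1
        omega
      rw [List.getElem_take, List.getElem_take, List.getElem_drop]
      have hpn : p + n < l.length := by omega
      have := hper (p + n) hpn (by omega) (by omega)
      simpa [Nat.add_sub_cancel_left] using this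
  have hlt : wlt l (l.drop p) := lyndon_suffix hl hp hpp
  unfold wlt at hlt
  have hdecomp2 : l.drop p = l.take (m - p) ++ l.drop m := by
    conv_lhs => rw [← List.take_append_drop (m - p) (l.drop p)]
    rw [htake, List.drop_drop, show p + (m - p) = m by omega]
  have hlex : List.Lex (· < ·) (l.take (m - p) ++ l.drop (m - p))
      (l.take (m - p) ++ l.drop m) := by
    rw [List.take_append_drop, ← hdecomp2]
    exact hlt
  have h2 := lex_append_cancel _ _ _ hlex
  rw [List.drop_eq_getElem_cons (show m - p < l.length by omega),
      List.drop_eq_getElem_cons hmN] at h2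
  exact lex_cons_le h2

/-- A Lyndon word is unbordered: it has no period `p < length`. -/
theorem unbordered {l : List α} (hl : IsLyndon l) {p : ℕ} (hp : 1 ≤ p) (hpN : p < l.length)
    (hper : Per l l.length p) : False := by
  have hdrop : l.drop p = l.take (l.length - p) := by
    apply List.ext_getElem
    · rw [List.length_take, List.length_drop,
          inf_eq_left.mpr (show l.length - p ≤ l.length by omega)]
    · intro n h1 h2
      rw [List.length_drop] at h1
      rw [List.getElem_drop, List.getElem_take]
      have hpn : p + n < l.length := by omega
      have := hper (p + n) hpn (by omega) (by omega)
      simpa [Nat.add_sub_cancel_left] using this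
  have hlt := lyndon_suffix hl hp hpN
  unfold wlt at hlt
  rw [hdrop] at hlt
  have : List.Lex (· < ·) (l.take (l.length - p) ++ l.drop (l.length - p))
      (l.take (l.length - p)) := by
    rw [List.take_append_drop]
    exact hlt
  exact lex_append_self _ _ this

/-! ### Self-shuffle states -/

/-- Self-shuffle state: `take (i+j) l` is an interleaving of `take i l` and `take j l`. -/
def SS (l : List α) (i j : ℕ) : Prop :=
  Interleave (l.take i) (l.take j) (l.take (i + j))

theorem ss_comm {l : List α} {i j : ℕ} (h : SS l i j) : SS l j i := by
  unfold SS at *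
  rw [Nat.add_comm]
  exact il_comm h

theorem ss_zero_left (l : List α) (j : ℕ) : SS l 0 j := by
  unfold SS
  simpa using il_nil_left (l.take j)

theorem ss_zero_right (l : List α) (i : ℕ) : SS l i 0 := by
  unfold SS
  simpa using il_nil_right (l.take i)

theorem ss_append_red {l : List α} {i j : ℕ} (h : SS l i j) (hm : i + j < l.length)
    (hletter : l[i + j] = l[i]'(by omega)) : SS l (i + 1) j := by
  unfold SS at *
  have h1 : i + 1 + j = (i + j) + 1 := by omega
  rw [h1, take_succ' hm, take_succ' (show i < l.length by omega), hletter]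
  exact il_snoc_left _ h

theorem ss_append_blue {l : List α} {i j : ℕ} (h : SS l i j) (hm : i + j < l.length)
    (hletter : l[i + j] = l[j]'(by omega)) : SS l i (j + 1) := by
  have h2 : l[j + i]'(by omega) = l[j]'(by omega) := (gidx (by omega)).trans hletter
  have := ss_append_red (ss_comm h) (by omega) h2
  exact ss_comm this

theorem ss_last {l : List α} {i j : ℕ} (h : SS l i j) (hi : 1 ≤ i) (hj : 1 ≤ j)
    (hm : i + j ≤ l.length) :
    (l[i - 1]'(by omega) = l[i + j - 1]'(by omega) ∧ SS l (i - 1) j) ∨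
    (l[j - 1]'(by omega) = l[i + j - 1]'(by omega) ∧ SS l i (j - 1)) := by
  unfold SS at h
  have hm1 : i + j - 1 < l.length := by omega
  rw [show i + j = (i + j - 1) + 1 by omega, take_succ' hm1] at h
  rcases il_snoc_inv h with ⟨u₀, hu, hh⟩ | ⟨v₀, hv, hh⟩
  · left
    have hi1 : i - 1 < l.length := by omega
    have hu2 : l.take (i - 1) ++ [l[i - 1]'hi1] = u₀ ++ [l[i + j - 1]'hm1] := by
      rw [← take_succ' hi1, show (i - 1) + 1 = i by omega]
      exact hu
    rcases snoc_inj hu2 with ⟨hu0, hc⟩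
    refine ⟨hc, ?_⟩
    unfold SS
    rw [show i - 1 + j = i + j - 1 by omega, hu0]
    exact hh
  · right
    have hj1 : j - 1 < l.length := by omega
    have hv2 : l.take (j - 1) ++ [l[j - 1]'hj1] = v₀ ++ [l[i + j - 1]'hm1] := by
      rw [← take_succ' hj1, show (j - 1) + 1 = j by omega]
      exact hv
    rcases snoc_inj hv2 with ⟨hv0, hc⟩
    refine ⟨hc, ?_⟩
    unfold SS
    rw [show i + (j - 1) = i + j - 1 by omega, hv0]
    exact hh

/-! ### The key period-step lemma and head bounds -/

theorem pstep_head {l : List α} (hl : IsLyndon l) : ∀ m : ℕ,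
    (∀ i j, i + j = m → 1 ≤ i → 1 ≤ j → m ≤ l.length → SS l i j →
      ∃ p, 1 ≤ p ∧ Per l m p ∧
        ((p ≤ i ∧ SS l (i - p) j) ∨ (p ≤ j ∧ SS l i (j - p)))) ∧
    (∀ i j (hij : i + j = m) (hm : m < l.length), SS l i j →
      l[i]'(by omega) ≤ l[m]'hm) := by
  intro m
  induction m using Nat.strong_induction_on with
  | _ m IH =>
  -- the "red-last" core
  have aux : ∀ i j (hij : i + j = m) (hi : 1 ≤ i) (hj : 1 ≤ j) (hmN : m ≤ l.length),
      (l[i - 1]'(by omega) = l[m - 1]'(by omega)) → SS l (i - 1) j →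
      ∃ p, 1 ≤ p ∧ Per l m p ∧
        ((p ≤ i ∧ SS l (i - p) j) ∨ (p ≤ j ∧ SS l i (j - p))) := by
    intro i j hij hi hj hmN hc hss
    by_cases hi1 : i = 1
    · -- base: i = 1, j = m - 1
      subst hi1
      refine ⟨j, hj, ?_, Or.inr ⟨le_rfl, ?_⟩⟩
      · intro r hr hjr hrm
        have hr1 : r = m - 1 := by omega
        calc l[r]'hr = l[m - 1]'(by omega) := gidx hr1
          _ = l[1 - 1]'(by omega) := hc.symm
          _ = l[r - j]'(lt_of_le_of_lt (Nat.sub_le r j) hr) := gidx (by omega)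
      · have : j - j = 0 := Nat.sub_self j
        rw [this]
        exact ss_zero_right l 1
    · have hi2 : 2 ≤ i := by omega
      obtain ⟨P, _⟩ := IH (m - 1) (by omega)
      obtain ⟨p', hp1, hper, hcase⟩ := P (i - 1) j (by omega) (by omega) hj (by omega) hss
      rcases hcase with ⟨hpi, hsub⟩ | ⟨hpj, hsub⟩
      · -- CASE α : substate SS (i-1-p') j
        have h1 : l[i - 1]'(by omega) = l[i - 1 - p']'(by omega) :=
          hper (i - 1) (by omega) hpi (by omega)
        obtain ⟨_, H2⟩ := IH (m - 1 - p') (by omega)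
        have h2 : l[i - 1 - p']'(by omega) ≤ l[m - 1 - p']'(by omega) :=
          H2 (i - 1 - p') j (by omega) (show m - 1 - p' < l.length by omega) hsub
        have h3 : l[m - 1 - p']'(by omega) ≤ l[m - 1]'(by omega) :=
          factD hl hp1 (show p' ≤ m - 1 by omega) (show m - 1 < l.length by omega) hper
        have heq : l[m - 1 - p']'(by omega) = l[m - 1]'(by omega) := by
          apply le_antisymm h3
          calc l[m - 1]'(by omega) = l[i - 1]'(by omega) := hc.symm
            _ = l[i - 1 - p']'(by omega) := h1
            _ ≤ l[m - 1 - p']'(by omega) := h2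
        have hletter : l[m - 1 - p']'(by omega) = l[i - 1 - p']'(by omega) := by
          rw [heq, ← hc, h1]
        refine ⟨p', hp1, ?_, Or.inl ⟨by omega, ?_⟩⟩
        · intro r hr hpr hrm
          by_cases hr1 : r < m - 1
          · exact hper r hr hpr hr1
          · obtain rfl : r = m - 1 := by omega
            exact heq.symm
        · have := ss_append_red (i := i - 1 - p') (j := j) hsub (by omega)
            ((gidx (by omega)).trans hletter)
          rw [show i - 1 - p' + 1 = i - p' by omega] at this
          exact this
      · -- CASE β : substate SS (i-1) (j-p')
        obtain ⟨_, H2⟩ := IH (m - 1 - p') (by omega)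
        have h2 : l[i - 1]'(by omega) ≤ l[m - 1 - p']'(by omega) :=
          H2 (i - 1) (j - p') (by omega) (show m - 1 - p' < l.length by omega) hsub
        have h3 : l[m - 1 - p']'(by omega) ≤ l[m - 1]'(by omega) :=
          factD hl hp1 (show p' ≤ m - 1 by omega) (show m - 1 < l.length by omega) hper
        have heq : l[m - 1 - p']'(by omega) = l[m - 1]'(by omega) := by
          apply le_antisymm h3
          rw [← hc]
          exact h2
        have hletter : l[m - 1 - p']'(by omega) = l[i - 1]'(by omega) := by
          rw [heq, ← hc]
        refine ⟨p', hp1, ?_, Or.inr ⟨by omega, ?_⟩⟩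
        · intro r hr hpr hrm
          by_cases hr1 : r < m - 1
          · exact hper r hr hpr hr1
          · obtain rfl : r = m - 1 := by omega
            exact heq.symm
        · have := ss_append_red (i := i - 1) (j := j - p') hsub (by omega)
            ((gidx (by omega)).trans hletter)
          rw [show i - 1 + 1 = i by omega] at this
          exact this
  -- PSTEP at m
  have hP : ∀ i j, i + j = m → 1 ≤ i → 1 ≤ j → m ≤ l.length → SS l i j →
      ∃ p, 1 ≤ p ∧ Per l m p ∧
        ((p ≤ i ∧ SS l (i - p) j) ∨ (p ≤ j ∧ SS l i (j - p))) := by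
    intro i j hij hi hj hmN hss
    rcases ss_last hss hi hj (by omega) with ⟨hc, hsub⟩ | ⟨hc, hsub⟩
    · exact aux i j hij hi hj hmN (hc.trans (gidx (by omega))) hsub
    · obtain ⟨p, hp1, hper, hcase⟩ := aux j i (by omega) hj hi hmN
        (hc.trans (gidx (by omega))) (ss_comm hsub)
      refine ⟨p, hp1, hper, ?_⟩
      rcases hcase with ⟨hpj, hsub2⟩ | ⟨hpi, hsub2⟩
      · exact Or.inr ⟨hpj, ss_comm hsub2⟩
      · exact Or.inl ⟨hpi, ss_comm hsub2⟩
  refine ⟨hP, ?_⟩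
  -- HEAD at m
  intro i j hij hm hss
  rcases Nat.eq_zero_or_pos i with rfl | hi
  · exact min_letter hl hm
  rcases Nat.eq_zero_or_pos j with rfl | hj
  · have : i = m := by omega
    subst this
    exact le_rfl
  obtain ⟨p, hp1, hper, hcase⟩ := hP i j hij hi hj (le_of_lt hm) hss
  have hpm : p ≤ m := by rcases hcase with ⟨h, _⟩ | ⟨h, _⟩ <;> omega
  have h3 : l[m - p]'(by omega) ≤ l[m]'hm := factD hl hp1 hpm hm hper
  rcases hcase with ⟨hpi, hsub⟩ | ⟨hpj, hsub⟩
  · obtain ⟨_, H2⟩ := IH (m - p) (by omega)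
    have h2 : l[i - p]'(by omega) ≤ l[m - p]'(by omega) :=
      H2 (i - p) j (by omega) (show m - p < l.length by omega) hsub
    have h1 : l[i]'(by omega) = l[i - p]'(by omega) :=
      hper i (by omega) hpi (by omega)
    calc l[i]'(by omega) = l[i - p]'(by omega) := h1
      _ ≤ l[m - p]'(by omega) := h2
      _ ≤ l[m]'hm := h3
  · obtain ⟨_, H2⟩ := IH (m - p) (by omega)
    have h2 : l[i]'(by omega) ≤ l[m - p]'(by omega) :=
      H2 i (j - p) (by omega) (show m - p < l.length by omega) hsub
    exact le_trans h2 h3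

theorem gamma {l : List α} (hl : IsLyndon l) {i j : ℕ} (hij : i + j = l.length)
    (hi : 1 ≤ i) (hj : 1 ≤ j) (hss : SS l i j) : False := by
  obtain ⟨p, hp1, hper, hcase⟩ := (pstep_head hl l.length).1 i j hij hi hj le_rfl hss
  have hpN : p < l.length := by rcases hcase with ⟨h, _⟩ | ⟨h, _⟩ <;> omega
  exact unbordered hl hp1 hpN hper

/-! ### Facts about w -/

theorem take_prefix_letter {l w : List α} (hw : wle w l) {j : ℕ}
    (hpre : w.take j = l.take j) (hjM : j < w.length) (hjN : j < l.length) :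
    w[j] ≤ l[j] := by
  rcases hw with hw | rfl
  · unfold wlt at hw
    have hlex : List.Lex (· < ·) (w.take j ++ w.drop j) (w.take j ++ l.drop j) := by
      rw [List.take_append_drop, hpre, List.take_append_drop]
      exact hw
    have h2 := lex_append_cancel _ _ _ hlex
    rw [List.drop_eq_getElem_cons hjM, List.drop_eq_getElem_cons hjN] at h2
    exact lex_cons_le h2
  · exact le_rfl

theorem eq_of_take_eq_self {l w : List α} (hw : wle w l) (h : w.take l.length = l) :
    w = l := by
  have hNM : l.length ≤ w.length := by
    have h2 := congrArg List.length h
    rw [List.length_take, inf_eq_left] at h2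
    exact h2
  rcases eq_or_lt_of_le hNM with heq | hlt
  · rw [← h, List.take_of_length_le (le_of_eq heq.symm)]
  · exfalso
    have hw2 : List.Lex (· < ·) l w := by
      have hdec : w = l ++ w.drop l.length := by
        conv_lhs => rw [← List.take_append_drop l.length w]
        rw [h]
      rw [hdec]
      apply lex_prefix
      apply List.ne_nil_of_length_pos
      rw [List.length_drop]
      omega
    rcases hw with hw | rfl
    · exact lex_asymm hw hw2
    · exact lex_asymm hw2 hw2

/-! ### Main induction -/

theorem main {l w : List α} (hl : IsLyndon l) (hw : wle w l) :
    ∀ {t y z : List α}, Interleave t y z → ∀ i j, t = l.drop i → y = w.drop j →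
      (i = l.length ∨
       (i < l.length ∧ i + j ≤ l.length ∧ SS l i j ∧ w.take j = l.take j) ∨
       (w = l ∧ j = l.length ∧ i < l.length)) →
      wle z ((l ++ w).drop (i + j)) := by
  intro t y z hz
  induction hz with
  | nil => intro i j ht hy hinv; exact wle_nil _
  | @left u v z' a h IH =>
    intro i j ht hy hinv
    obtain ⟨hiN, ha, hu⟩ := drop_cons_inv ht
    rcases hinv with hA | ⟨hiN', hmN, hss, hpre⟩ | ⟨hwl, hjN, hiN'⟩
    · omega
    · -- branch (B)
      rcases lt_or_eq_of_le hmN with hmLT | hmEQ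
      · -- i + j < l.length
        have hhead : l[i]'hiN ≤ l[i + j]'hmLT := (pstep_head hl (i + j)).2 i j rfl hmLT hss
        have hmlw : i + j < (l ++ w).length := by simp; omega
        have hBdecomp : (l ++ w).drop (i + j) =
            l[i + j]'hmLT :: (l ++ w).drop (i + j + 1) := by
          rw [List.drop_eq_getElem_cons hmlw]
          congr 1
          exact List.getElem_append_left hmLT
        rw [hBdecomp]
        rcases lt_or_eq_of_le hhead with hlt | heqq
        · exact Or.inl (List.Lex.rel (ha ▸ hlt))
        · have hinv' : (i + 1 = l.length ∨
              (i + 1 < l.length ∧ (i + 1) + j ≤ l.length ∧ SS l (i + 1) j ∧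
                w.take j = l.take j) ∨
              (w = l ∧ j = l.length ∧ i + 1 < l.length)) := by
            by_cases hi1 : i + 1 = l.length
            · exact Or.inl hi1
            · refine Or.inr (Or.inl ⟨by omega, by omega, ?_, hpre⟩)
              exact ss_append_red hss hmLT heqq.symm
          have hz' := IH (i + 1) j hu hy hinv'
          rw [show i + 1 + j = i + j + 1 by omega] at hz'
          rw [ha, heqq]
          exact wle_cons hz'
      · -- i + j = l.length
        have hi0 : i = 0 := by
          by_contra h0
          exact gamma hl hmEQ (by omega) (by omega) hss
        subst hi0
        have hjN : j = l.length := by omega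
        have hwl : w = l := by
          apply eq_of_take_eq_self hw
          rw [← hjN, hpre, hjN, List.take_length]
        -- bound is (l ++ w).drop j = l
        have hB : (l ++ w).drop (0 + j) = l := by
          rw [hwl, Nat.zero_add, hjN]
          exact List.drop_left (l₁ := l) (l₂ := l)
        rw [hB]
        have hz' := IH 1 j hu hy (by
          by_cases h1N : 1 = l.length
          · exact Or.inl h1N
          · exact Or.inr (Or.inr ⟨hwl, hjN, by omega⟩))
        have hB' : (l ++ w).drop (1 + j) = l.drop 1 := by
          rw [hwl, hjN, Nat.add_comm]
          exact List.drop_length_add_append 1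
        rw [hB'] at hz'
        have hl0 : l = l[0]'(lyndon_length_pos hl) :: l.drop (0 + 1) := by
          conv_lhs => rw [← List.drop_zero (l := l)]
          rw [List.drop_eq_getElem_cons (lyndon_length_pos hl)]
        rw [hl0, ha]
        exact wle_cons hz'
    · -- branch (C) : w = l, j = l.length
      have hB : (l ++ w).drop (i + j) = l.drop i := by
        rw [hwl, hjN, Nat.add_comm]
        exact List.drop_length_add_append i
      have hB' : (l ++ w).drop (i + 1 + j) = l.drop (i + 1) := by
        rw [hwl, hjN, Nat.add_comm]
        exact List.drop_length_add_append (i + 1)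
      have hz' := IH (i + 1) j hu hy (by
        by_cases h1N : i + 1 = l.length
        · exact Or.inl h1N
        · exact Or.inr (Or.inr ⟨hwl, hjN, by omega⟩))
      rw [hB'] at hz'
      rw [hB, List.drop_eq_getElem_cons hiN, ha]
      exact wle_cons hz'
  | @right u v z' b h IH =>
    intro i j ht hy hinv
    obtain ⟨hjM, hb, hv⟩ := drop_cons_inv hy
    rcases hinv with hA | ⟨hiN, hmN, hss, hpre⟩ | ⟨hwl, hjN, hiN⟩
    · -- (A) i = l.length
      have hB : (l ++ w).drop (i + j) = w.drop j := by
        rw [hA]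
        exact List.drop_length_add_append j
      have hB' : (l ++ w).drop (i + (j + 1)) = w.drop (j + 1) := by
        rw [hA]
        exact List.drop_length_add_append (j + 1)
      have hz' := IH i (j + 1) ht hv (Or.inl hA)
      rw [hB'] at hz'
      rw [hB, List.drop_eq_getElem_cons hjM, hb]
      exact wle_cons hz'
    · -- (B)
      rcases lt_or_eq_of_le hmN with hmLT | hmEQ
      · have hjN : j < l.length := by omega
        have hwj : w[j]'hjM ≤ l[j]'hjN := take_prefix_letter hw hpre hjM hjN
        have hlj : l[j]'hjN ≤ l[i + j]'hmLT :=
          (pstep_head hl (i + j)).2 j i (by omega) hmLT (ss_comm hss)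
        have hble : b ≤ l[i + j]'hmLT := by
          rw [hb]
          exact le_trans hwj hlj
        have hmlw : i + j < (l ++ w).length := by simp; omega
        have hBdecomp : (l ++ w).drop (i + j) =
            l[i + j]'hmLT :: (l ++ w).drop (i + j + 1) := by
          rw [List.drop_eq_getElem_cons hmlw]
          congr 1
          exact List.getElem_append_left hmLT
        rw [hBdecomp]
        rcases lt_or_eq_of_le hble with hlt | heqq
        · exact Or.inl (List.Lex.rel hlt)
        · have heqq' : w[j]'hjM = l[i + j]'hmLT := by rw [← hb]; exact heqq
          have h4 : l[j]'hjN ≤ w[j]'hjM := by rw [heqq']; exact hlj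
          have hwj_eq : w[j]'hjM = l[j]'hjN := le_antisymm hwj h4
          have hlj_eq : l[j]'hjN = l[i + j]'hmLT := by rw [← hwj_eq]; exact heqq'
          have hss' : SS l i (j + 1) := ss_append_blue hss hmLT hlj_eq.symm
          have hpre' : w.take (j + 1) = l.take (j + 1) := by
            rw [take_succ' hjM, take_succ' hjN, hpre, hwj_eq]
          have hz' := IH i (j + 1) ht hv
            (Or.inr (Or.inl ⟨hiN, by omega, hss', hpre'⟩))
          rw [show i + (j + 1) = i + j + 1 by omega] at hz'
          rw [heqq]
          exact wle_cons hz'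
      · -- i + j = l.length : impossible in right branch
        exfalso
        rcases Nat.eq_zero_or_pos i with rfl | hi
        · have hjN : j = l.length := by omega
          have hwl : w = l := by
            apply eq_of_take_eq_self hw
            rw [← hjN, hpre, hjN, List.take_length]
          rw [hwl] at hjM
          omega
        · exact gamma hl hmEQ (by omega) (by omega) hss
    · -- (C): impossible, y = [] but y = b :: v
      exfalso
      have hnil : w.drop j = [] := by
        rw [hwl, hjN]
        simp
      rw [hnil] at hy
      exact absurd hy (by simp)

end LyndonShuffleAux

/-- Lemma 3.2: if `l` is a Lyndon word and `w ≤ l`, then every interleaving of `l` and `w`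
is `≤ l·w`, and `l·w` is itself an interleaving of `l` and `w`; i.e. `l·w` is the largest
word occurring in the shuffle product of `l` and `w`. -/
theorem lyndon_shuffle_max {α : Type*} [LinearOrder α] [Fintype α]
    (l w : List α) (hl : IsLyndon l) (hw : wle w l) :
    (∀ z : List α, Interleave l w z → wle z (l ++ w)) ∧ Interleave l w (l ++ w) := by
  constructor
  · intro z hz
    have h0 := LyndonShuffleAux.main hl hw hz 0 0 (by simp) (by simp)
      (Or.inr (Or.inl ⟨LyndonShuffleAux.lyndon_length_pos hl, by simp,
        LyndonShuffleAux.ss_zero_left l 0, by simp⟩))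
    simpa using h0
  · exact LyndonShuffleAux.il_concat l w
end
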